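/- Fix an integer n ≥ 1 and reals p₀ < p₁ < 0, Γ > 0, λ > 0, g⟦ρ⟧ ∈ ℝ. There exists a solution M of problem (Pₙ) that is not identically zero if and only if the dispersion relation g⟦ρ⟧/n = Γ² coth(np₁/Γ) − λ² coth(n(p₁−p₀)/λ) holds. -/

import Mathlib

open Set

/-- The hyperbolic cotangent `coth t = cosh t / sinh t`. -/
noncomputable def coth (x : ℝ) : ℝ := Real.cosh x / Real.sinh x

/-- A solution of problem (Pₙ): `M : [p₀,0] → ℝ` is continuous, twice continuously
differentiable on `[p₀,p₁]` and on `[p₁,0]`, satisfies `Γ²M″ = n²M` on `(p₁,0)`,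
`λ²M″ = n²M` on `(p₀,p₁)`, `M(p₀) = M(0) = 0`, and the interface jump condition
`Γ³M′(p₁⁺) − λ³M′(p₁⁻) = gρ·M(p₁)` (with one-sided derivatives at `p₁`). -/
def IsPnSolution (n : ℕ) (p₀ p₁ Γ lam gρ : ℝ) (M : ℝ → ℝ) : Prop :=
  ContinuousOn M (Set.Icc p₀ 0) ∧
  ContDiffOn ℝ 2 M (Set.Icc p₀ p₁) ∧
  ContDiffOn ℝ 2 M (Set.Icc p₁ 0) ∧
  (∀ p ∈ Set.Ioo p₁ 0, Γ ^ 2 * deriv (deriv M) p = (n : ℝ) ^ 2 * M p) ∧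
  (∀ p ∈ Set.Ioo p₀ p₁, lam ^ 2 * deriv (deriv M) p = (n : ℝ) ^ 2 * M p) ∧
  M p₀ = 0 ∧ M 0 = 0 ∧
  Γ ^ 3 * derivWithin M (Set.Icc p₁ 0) p₁ - lam ^ 3 * derivWithin M (Set.Icc p₀ p₁) p₁
    = gρ * M p₁

/-- Wronskian constancy: if `M` solves `M'' = k²M` on `(a,b)` (in the `deriv` sense) and is
`C²` on `[a,b]`, and `φ` is a global solution of the same ODE, then the Wronskian
`D·φ - M·φ'` is constant on `[a,b]`, where `D = derivWithin M (Icc a b)`. -/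
lemma wrons {a b k : ℝ} (hab : a < b) {M φ φ' : ℝ → ℝ}
    (hM : ContDiffOn ℝ 2 M (Set.Icc a b))
    (hODE : ∀ p ∈ Set.Ioo a b, deriv (deriv M) p = k ^ 2 * M p)
    (hφ : ∀ p, HasDerivAt φ (φ' p) p)
    (hφ' : ∀ p, HasDerivAt φ' (k ^ 2 * φ p) p) :
    ∀ p ∈ Set.Icc a b, ∀ q ∈ Set.Icc a b,
      derivWithin M (Set.Icc a b) p * φ p - M p * φ' p
        = derivWithin M (Set.Icc a b) q * φ q - M q * φ' q := by
  set D := derivWithin M (Set.Icc a b) with hDdef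
  set F := fun p => D p * φ p - M p * φ' p with hFdef
  have hud : UniqueDiffOn ℝ (Set.Icc a b) := uniqueDiffOn_Icc hab
  have hφc : Continuous φ := by
    rw [continuous_iff_continuousAt]; exact fun p => (hφ p).continuousAt
  have hφ'c : Continuous φ' := by
    rw [continuous_iff_continuousAt]; exact fun p => (hφ' p).continuousAt
  have hFc : ContinuousOn F (Set.Icc a b) :=
    ((hM.continuousOn_derivWithin hud (by norm_num)).mul hφc.continuousOn).sub
      (hM.continuousOn.mul hφ'c.continuousOn)
  have hOd : ∀ p ∈ Set.Ioo a b, HasDerivAt F 0 p := by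
    intro p hp
    have hO : Set.Ioo a b ∈ nhds p := isOpen_Ioo.mem_nhds hp
    have hM2 : ContDiffOn ℝ (1 + 1) M (Set.Ioo a b) := by
      exact_mod_cast hM.mono Set.Ioo_subset_Icc_self
    have h2 := (contDiffOn_succ_iff_deriv_of_isOpen (n := 1) isOpen_Ioo).1 hM2
    have hdM : DifferentiableAt ℝ (deriv M) p :=
      ((h2.2.2.differentiableOn (by norm_num)) p hp).differentiableAt hO
    have hMd : DifferentiableAt ℝ M p := (h2.1 p hp).differentiableAt hO
    have hDeq : D =ᶠ[nhds p] deriv M := by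
      filter_upwards [hO] with q hq
      exact derivWithin_of_mem_nhds (Icc_mem_nhds hq.1 hq.2)
    have hDp : D p = deriv M p := derivWithin_of_mem_nhds (Icc_mem_nhds hp.1 hp.2)
    have h1 : HasDerivAt M (D p) p := by rw [hDp]; exact hMd.hasDerivAt
    have h2' : HasDerivAt D (deriv (deriv M) p) p :=
      hdM.hasDerivAt.congr_of_eventuallyEq hDeq
    rw [hODE p hp] at h2'
    have h3 := (h2'.mul (hφ p)).sub (h1.mul (hφ' p))
    exact h3.congr_deriv (by ring)
  have hdiff : DifferentiableOn ℝ F (interior (Set.Icc a b)) := by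
    rw [interior_Icc]
    exact fun p hp => ((hOd p hp).differentiableAt).differentiableWithinAt
  have hz : ∀ x ∈ interior (Set.Icc a b), deriv F x = 0 := by
    rw [interior_Icc]; exact fun x hx => (hOd x hx).deriv
  have hmono := monotoneOn_of_deriv_nonneg (convex_Icc a b) hFc hdiff
    (fun x hx => (hz x hx).ge)
  have hanti := antitoneOn_of_deriv_nonpos (convex_Icc a b) hFc hdiff
    (fun x hx => (hz x hx).le)
  have key : ∀ p ∈ Set.Icc a b, F p = F a := by
    intro p hp
    have ha : a ∈ Set.Icc a b := Set.left_mem_Icc.2 hab.le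
    exact le_antisymm (hanti ha hp hp.1) (hmono ha hp hp.1)
  intro p hp q hq
  exact (key p hp).trans (key q hq).symm

/-- Explicit solution formula on an interval from the two Wronskian constants. -/
lemma interval_formula {a b k : ℝ} (hab : a < b) {M v : ℝ → ℝ}
    (hM : ContDiffOn ℝ 2 M (Set.Icc a b))
    (hODE : ∀ p ∈ Set.Ioo a b, deriv (deriv M) p = k ^ 2 * M p)
    (hv : ∀ p, HasDerivAt v k p)
    {e : ℝ} (he : e ∈ Set.Icc a b) (hMe : M e = 0) (hve : v e = 0) :
    ∀ p ∈ Set.Icc a b,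
      M p * k = derivWithin M (Set.Icc a b) e * Real.sinh (v p) ∧
      derivWithin M (Set.Icc a b) p * Real.sinh (v p)
        = M p * (k * Real.cosh (v p)) := by
  have hs : ∀ p, HasDerivAt (fun q => Real.sinh (v q)) (k * Real.cosh (v p)) p := fun p => by
    simpa [mul_comm, Function.comp_def] using (Real.hasDerivAt_sinh (v p)).comp p (hv p)
  have hc : ∀ p, HasDerivAt (fun q => k * Real.cosh (v q)) (k ^ 2 * Real.sinh (v p)) p :=
    fun p => by
      have := ((Real.hasDerivAt_cosh (v p)).comp p (hv p)).const_mul k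
      exact this.congr_deriv (by ring)
  have hc2 : ∀ p, HasDerivAt (fun q => Real.cosh (v q)) (k * Real.sinh (v p)) p := fun p => by
    simpa [mul_comm, Function.comp_def] using (Real.hasDerivAt_cosh (v p)).comp p (hv p)
  have hs2 : ∀ p, HasDerivAt (fun q => k * Real.sinh (v q)) (k ^ 2 * Real.cosh (v p)) p :=
    fun p => by
      have := ((Real.hasDerivAt_sinh (v p)).comp p (hv p)).const_mul k
      exact this.congr_deriv (by ring)
  have W1 := wrons hab hM hODE hs (by simpa using hc)
  have W2 := wrons hab hM hODE hc2 (by simpa using hs2)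
  intro p hp
  have e1 := W1 p hp e he
  have e2 := W2 p hp e he
  rw [hMe, hve] at e1 e2
  simp only [Real.sinh_zero, Real.cosh_zero, mul_zero, zero_mul, mul_one, sub_zero] at e1 e2
  have hid := Real.cosh_sq_sub_sinh_sq (v p)
  constructor
  · linear_combination (Real.sinh (v p)) * e2 - (Real.cosh (v p)) * e1 - (M p * k) * hid
  · linarith [e1]

/-- **Nontrivial solvability of (Pₙ) characterizes the dispersion relation.**
For `n ≥ 1`, `p₀ < p₁ < 0`, `Γ > 0`, `λ > 0` and `gρ ∈ ℝ`, problem (Pₙ) admits a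
solution that is not identically zero if and only if
`gρ/n = Γ² coth(np₁/Γ) − λ² coth(n(p₁−p₀)/λ)`. -/
theorem stmt_4 (n : ℕ) (hn : 1 ≤ n) (p₀ p₁ Γ lam gρ : ℝ)
    (h₀₁ : p₀ < p₁) (h₁ : p₁ < 0) (hΓ : 0 < Γ) (hlam : 0 < lam) :
    (∃ M : ℝ → ℝ, IsPnSolution n p₀ p₁ Γ lam gρ M ∧ ¬(∀ p ∈ Set.Icc p₀ 0, M p = 0)) ↔
      gρ / n = Γ ^ 2 * coth (n * p₁ / Γ) - lam ^ 2 * coth (n * (p₁ - p₀) / lam) := by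
  have hnR : (0:ℝ) < (n:ℝ) := by exact_mod_cast hn
  have hn0 : (n:ℝ) ≠ 0 := hnR.ne'
  have harg1 : (0:ℝ) < (n:ℝ) * (p₁ - p₀) / lam :=
    div_pos (mul_pos hnR (sub_pos.2 h₀₁)) hlam
  have harg2 : (n:ℝ) * p₁ / Γ < 0 :=
    div_neg_of_neg_of_pos (mul_neg_of_pos_of_neg hnR h₁) hΓ
  have hs₁ : Real.sinh ((n:ℝ) * (p₁ - p₀) / lam) ≠ 0 := Real.sinh_ne_zero.2 harg1.ne'
  have hs₂ : Real.sinh ((n:ℝ) * p₁ / Γ) ≠ 0 := Real.sinh_ne_zero.2 harg2.ne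
  have hv₁ : ∀ p : ℝ, HasDerivAt (fun q => (n:ℝ) * (q - p₀) / lam) ((n:ℝ)/lam) p := fun p => by
    simpa using (((hasDerivAt_id p).sub_const p₀).const_mul (n:ℝ)).div_const lam
  have hv₂ : ∀ p : ℝ, HasDerivAt (fun q => (n:ℝ) * q / Γ) ((n:ℝ)/Γ) p := fun p => by
    simpa using ((hasDerivAt_id p).const_mul (n:ℝ)).div_const Γ
  constructor
  · rintro ⟨M, ⟨hMc, hC1, hC2, hode1, hode2, hMa, hM0, hjump⟩, hnt⟩
    have hODE1 : ∀ p ∈ Set.Ioo p₀ p₁, deriv (deriv M) p = ((n:ℝ)/lam) ^ 2 * M p := by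
      intro p hp
      have h := hode2 p hp
      rw [div_pow, div_mul_eq_mul_div, eq_div_iff (pow_ne_zero 2 hlam.ne')]
      linarith
    have hODE2 : ∀ p ∈ Set.Ioo p₁ 0, deriv (deriv M) p = ((n:ℝ)/Γ) ^ 2 * M p := by
      intro p hp
      have h := hode1 p hp
      rw [div_pow, div_mul_eq_mul_div, eq_div_iff (pow_ne_zero 2 hΓ.ne')]
      linarith
    have F1 := interval_formula h₀₁ hC1 hODE1 hv₁ (Set.left_mem_Icc.2 h₀₁.le) hMa (by simp)
    have F2 := interval_formula h₁ hC2 hODE2 hv₂ (Set.right_mem_Icc.2 h₁.le) hM0 (by simp)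
    obtain ⟨f11, f12⟩ := F1 p₁ (Set.right_mem_Icc.2 h₀₁.le)
    obtain ⟨f21, f22⟩ := F2 p₁ (Set.left_mem_Icc.2 h₁.le)
    by_cases hM₁ : M p₁ = 0
    · exfalso
      apply hnt
      intro p hp
      rw [hM₁, zero_mul] at f11 f21
      have hD0 : derivWithin M (Set.Icc p₀ p₁) p₀ = 0 :=
        (mul_eq_zero.1 f11.symm).resolve_right hs₁
      have hE0 : derivWithin M (Set.Icc p₁ 0) 0 = 0 :=
        (mul_eq_zero.1 f21.symm).resolve_right hs₂
      by_cases hple : p ≤ p₁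
      · have h := (F1 p ⟨hp.1, hple⟩).1
        rw [hD0, zero_mul] at h
        exact (mul_eq_zero.1 h).resolve_right (div_ne_zero hn0 hlam.ne')
      · have h := (F2 p ⟨le_of_not_ge hple, hp.2⟩).1
        rw [hE0, zero_mul] at h
        exact (mul_eq_zero.1 h).resolve_right (div_ne_zero hn0 hΓ.ne')
    · have hkey : gρ * (Real.sinh ((n:ℝ)*(p₁-p₀)/lam) * Real.sinh ((n:ℝ)*p₁/Γ)) =
          (n:ℝ) * (Γ^2 * Real.cosh ((n:ℝ)*p₁/Γ) * Real.sinh ((n:ℝ)*(p₁-p₀)/lam)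
            - lam^2 * Real.cosh ((n:ℝ)*(p₁-p₀)/lam) * Real.sinh ((n:ℝ)*p₁/Γ)) := by
        have f12' : lam * (derivWithin M (Set.Icc p₀ p₁) p₁ * Real.sinh ((n:ℝ)*(p₁-p₀)/lam))
            = M p₁ * ((n:ℝ) * Real.cosh ((n:ℝ)*(p₁-p₀)/lam)) := by
          rw [f12]; field_simp
        have f22' : Γ * (derivWithin M (Set.Icc p₁ 0) p₁ * Real.sinh ((n:ℝ)*p₁/Γ))
            = M p₁ * ((n:ℝ) * Real.cosh ((n:ℝ)*p₁/Γ)) := by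
          rw [f22]; field_simp
        apply mul_left_cancel₀ hM₁
        linear_combination (-(Real.sinh ((n:ℝ)*(p₁-p₀)/lam) * Real.sinh ((n:ℝ)*p₁/Γ))) * hjump
          + (Γ^2 * Real.sinh ((n:ℝ)*(p₁-p₀)/lam)) * f22'
          - (lam^2 * Real.sinh ((n:ℝ)*p₁/Γ)) * f12'
      simp only [coth]
      field_simp
      linear_combination hkey
  · intro hdisp
    set f : ℝ → ℝ := fun p => Real.sinh ((n:ℝ) * (p - p₀) / lam) / Real.sinh ((n:ℝ) * (p₁ - p₀) / lam) with hfdef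
    set g : ℝ → ℝ := fun p => Real.sinh ((n:ℝ) * p / Γ) / Real.sinh ((n:ℝ) * p₁ / Γ) with hgdef
    set M : ℝ → ℝ := fun p => if p ≤ p₁ then f p else g p with hMdef
    have hf1 : f p₁ = 1 := div_self hs₁
    have hg1 : g p₁ = 1 := div_self hs₂
    have hMp₁ : M p₁ = 1 := by rw [hMdef]; simp only [if_pos le_rfl]; exact hf1
    have hfg : Set.EqOn M g (Set.Icc p₁ 0) := by
      intro p hp
      rcases eq_or_lt_of_le hp.1 with h | h
      · rw [hMdef]; simp only [← h, if_pos le_rfl]; rw [hf1, hg1]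
      · rw [hMdef]; simp only [if_neg (not_le.2 h)]
    have hff : Set.EqOn M f (Set.Icc p₀ p₁) := fun p hp => if_pos hp.2
    have hdf : ∀ p, HasDerivAt f
        (Real.cosh ((n:ℝ) * (p - p₀) / lam) * ((n:ℝ)/lam) / Real.sinh ((n:ℝ) * (p₁ - p₀) / lam)) p := by
      intro p
      have := ((Real.hasDerivAt_sinh _).comp p (hv₁ p)).div_const (Real.sinh ((n:ℝ) * (p₁ - p₀) / lam))
      simpa [Function.comp_def, hfdef] using this
    have hdg : ∀ p, HasDerivAt g
        (Real.cosh ((n:ℝ) * p / Γ) * ((n:ℝ)/Γ) / Real.sinh ((n:ℝ) * p₁ / Γ)) p := by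
      intro p
      have := ((Real.hasDerivAt_sinh _).comp p (hv₂ p)).div_const (Real.sinh ((n:ℝ) * p₁ / Γ))
      simpa [Function.comp_def, hgdef] using this
    have hdf2 : ∀ p, HasDerivAt
        (fun q => Real.cosh ((n:ℝ) * (q - p₀) / lam) * ((n:ℝ)/lam) / Real.sinh ((n:ℝ) * (p₁ - p₀) / lam))
        (Real.sinh ((n:ℝ) * (p - p₀) / lam) * ((n:ℝ)/lam) * ((n:ℝ)/lam) / Real.sinh ((n:ℝ) * (p₁ - p₀) / lam)) p := by
      intro p
      have := (((Real.hasDerivAt_cosh _).comp p (hv₁ p)).mul_const ((n:ℝ)/lam)).div_const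
        (Real.sinh ((n:ℝ) * (p₁ - p₀) / lam))
      simpa [Function.comp_def] using this
    have hdg2 : ∀ p, HasDerivAt
        (fun q => Real.cosh ((n:ℝ) * q / Γ) * ((n:ℝ)/Γ) / Real.sinh ((n:ℝ) * p₁ / Γ))
        (Real.sinh ((n:ℝ) * p / Γ) * ((n:ℝ)/Γ) * ((n:ℝ)/Γ) / Real.sinh ((n:ℝ) * p₁ / Γ)) p := by
      intro p
      have := (((Real.hasDerivAt_cosh _).comp p (hv₂ p)).mul_const ((n:ℝ)/Γ)).div_const
        (Real.sinh ((n:ℝ) * p₁ / Γ))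
      simpa [Function.comp_def] using this
    have hderivf : deriv f = fun p =>
        Real.cosh ((n:ℝ) * (p - p₀) / lam) * ((n:ℝ)/lam) / Real.sinh ((n:ℝ) * (p₁ - p₀) / lam) :=
      funext fun p => (hdf p).deriv
    have hderivg : deriv g = fun p =>
        Real.cosh ((n:ℝ) * p / Γ) * ((n:ℝ)/Γ) / Real.sinh ((n:ℝ) * p₁ / Γ) :=
      funext fun p => (hdg p).deriv
    have hfc : Continuous f := continuous_iff_continuousAt.2 fun p => (hdf p).continuousAt
    have hgc : Continuous g := continuous_iff_continuousAt.2 fun p => (hdg p).continuousAt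
    have hfcd : ContDiff ℝ 2 f := by
      rw [hfdef]
      exact (Real.contDiff_sinh.comp
        ((contDiff_const.mul (contDiff_id.sub contDiff_const)).div_const lam)).div_const _
    have hgcd : ContDiff ℝ 2 g := by
      rw [hgdef]
      exact (Real.contDiff_sinh.comp
        ((contDiff_const.mul contDiff_id).div_const Γ)).div_const _
    refine ⟨M, ⟨?_, ?_, ?_, ?_, ?_, ?_, ?_, ?_⟩, fun h => ?_⟩
    · refine Continuous.continuousOn ?_
      rw [hMdef]
      exact Continuous.if_le hfc hgc continuous_id continuous_const
        (fun x hx => by rw [hx, hf1, hg1])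
    · exact hfcd.contDiffOn.congr hff
    · exact hgcd.contDiffOn.congr hfg
    · intro p hp
      have hev : M =ᶠ[nhds p] g := by
        filter_upwards [isOpen_Ioi.mem_nhds hp.1] with q hq
        rw [hMdef]; exact if_neg (not_le.2 hq)
      have h1 : deriv (deriv M) p = deriv (deriv g) p := (hev.deriv).deriv_eq
      have h2 : deriv (deriv g) p
          = Real.sinh ((n:ℝ) * p / Γ) * ((n:ℝ)/Γ) * ((n:ℝ)/Γ) / Real.sinh ((n:ℝ) * p₁ / Γ) := by
        rw [hderivg]; exact (hdg2 p).deriv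
      have hMg : M p = g p := by rw [hMdef]; exact if_neg (not_le.2 hp.1)
      rw [h1, h2, hMg, hgdef]
      field_simp
    · intro p hp
      have hev : M =ᶠ[nhds p] f := by
        filter_upwards [isOpen_Iio.mem_nhds hp.2] with q hq
        rw [hMdef]; exact if_pos hq.le
      have h1 : deriv (deriv M) p = deriv (deriv f) p := (hev.deriv).deriv_eq
      have h2 : deriv (deriv f) p
          = Real.sinh ((n:ℝ) * (p - p₀) / lam) * ((n:ℝ)/lam) * ((n:ℝ)/lam)
            / Real.sinh ((n:ℝ) * (p₁ - p₀) / lam) := by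
        rw [hderivf]; exact (hdf2 p).deriv
      have hMf : M p = f p := by rw [hMdef]; exact if_pos hp.2.le
      rw [h1, h2, hMf, hfdef]
      field_simp
    · rw [hMdef]; simp only [if_pos h₀₁.le, hfdef]; simp
    · rw [hMdef]; simp only [if_neg (not_le.2 h₁), hgdef]; simp
    · have hDW2 : derivWithin M (Set.Icc p₁ 0) p₁
          = Real.cosh ((n:ℝ) * p₁ / Γ) * ((n:ℝ)/Γ) / Real.sinh ((n:ℝ) * p₁ / Γ) := by
        rw [derivWithin_congr hfg (hfg (Set.left_mem_Icc.2 h₁.le)),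
          (hdg p₁).differentiableAt.derivWithin ((uniqueDiffOn_Icc h₁) p₁ (Set.left_mem_Icc.2 h₁.le))]
        exact (hdg p₁).deriv
      have hDW1 : derivWithin M (Set.Icc p₀ p₁) p₁
          = Real.cosh ((n:ℝ) * (p₁ - p₀) / lam) * ((n:ℝ)/lam) / Real.sinh ((n:ℝ) * (p₁ - p₀) / lam) := by
        rw [derivWithin_congr hff (hff (Set.right_mem_Icc.2 h₀₁.le)),
          (hdf p₁).differentiableAt.derivWithin
            ((uniqueDiffOn_Icc h₀₁) p₁ (Set.right_mem_Icc.2 h₀₁.le))]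
        exact (hdf p₁).deriv
      rw [hDW1, hDW2, hMp₁, mul_one]
      simp only [coth] at hdisp
      rw [div_eq_iff hn0] at hdisp
      field_simp at hdisp ⊢
      linear_combination (-1 : ℝ) * hdisp
    · have := h p₁ ⟨h₀₁.le, h₁.le⟩
      rw [hMp₁] at this
      exact one_ne_zero this
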